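/- arXiv:1503.00817 — 2 statements merged into one kernel-verified Lean document; each statement's English description precedes it below -/
import Mathlib

section
/- If (a_n) is a sequence of positive reals with n·(a_n/a_{n+1} − 1) ≥ r eventually for some real r > 1, then ∑ a_n converges. -/
theorem raabe_convergence_test (a : ℕ → ℝ) (ha : ∀ n, 0 < a n) (r : ℝ) (hr : 1 < r)
    (h : ∀ᶠ n : ℕ in Filter.atTop, r ≤ (n : ℝ) * (a n / a (n + 1) - 1)) :
    Summable a := by
  obtain ⟨N, hN⟩ := Filter.eventually_atTop.mp h
  have key : ∀ n, N ≤ n → (r - 1) * a (n + 1) ≤ (n : ℝ) * a n - ((n : ℝ) + 1) * a (n + 1) := by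
    intro n hn
    have h1 := hN n hn
    have h2 := ha (n + 1)
    have e : a n / a (n + 1) * a (n + 1) = a n := div_mul_cancel₀ _ h2.ne'
    nlinarith [mul_le_mul_of_nonneg_right h1 h2.le]
  have hr' : (0:ℝ) < r - 1 := by linarith
  rw [← summable_nat_add_iff (N + 1)]
  apply summable_of_sum_range_le (c := (N : ℝ) * a N / (r - 1))
  · intro n; exact (ha _).le
  · intro m
    rw [le_div_iff₀ hr']
    have hsum : (r - 1) * ∑ k ∈ Finset.range m, a (k + (N + 1)) ≤ (N : ℝ) * a N := by
      rw [Finset.mul_sum]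
      calc ∑ k ∈ Finset.range m, (r - 1) * a (k + (N + 1))
          ≤ ∑ k ∈ Finset.range m,
              ((((N + k : ℕ) : ℝ)) * a (N + k) - (((N + (k + 1) : ℕ) : ℝ)) * a (N + (k + 1))) := by
            apply Finset.sum_le_sum
            intro k _
            have hk := key (N + k) (Nat.le_add_right _ _)
            have e1 : k + (N + 1) = N + k + 1 := by omega
            have e2 : N + (k + 1) = N + k + 1 := by omega
            rw [e1, e2]
            push_cast at hk ⊢
            linarith
        _ = (N : ℝ) * a N - ((N + m : ℕ) : ℝ) * a (N + m) :=
            Finset.sum_range_sub' (fun k => ((N + k : ℕ) : ℝ) * a (N + k)) m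
        _ ≤ (N : ℝ) * a N := by
            have h3 := ha (N + m)
            nlinarith [Nat.cast_nonneg (α := ℝ) (N + m)]
    linarith [hsum]
end

section
/- If ∑ a_n is a divergent series of positive reals, then there exists a monotone sequence (b_n) of positive reals with b_n → 0 such that ∑ a_n·b_n still diverges. -/
theorem exists_slower_divergent (a : ℕ → ℝ) (ha : ∀ n, 0 < a n) (hs : ¬ Summable a) :
    ∃ b : ℕ → ℝ, Antitone b ∧ (∀ n, 0 < b n) ∧
      Filter.Tendsto b Filter.atTop (nhds 0) ∧
      ¬ Summable (fun n => a n * b n) := by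
  set S : ℕ → ℝ := fun n => ∑ i ∈ Finset.range (n + 1), a i with hS
  have hSpos : ∀ n, 0 < S n := fun n =>
    Finset.sum_pos (fun i _ => ha i) (Finset.nonempty_range_add_one)
  have hSmono : Monotone S := by
    intro m n h
    exact Finset.sum_le_sum_of_subset_of_nonneg
      (Finset.range_subset_range.2 (by omega)) (fun i _ _ => (ha i).le)
  have hSsucc : ∀ n, S (n + 1) = S n + a (n + 1) := fun n =>
    Finset.sum_range_succ a (n + 1)
  have hStop : Filter.Tendsto S Filter.atTop Filter.atTop := by
    have h0 : Filter.Tendsto (fun n => ∑ i ∈ Finset.range n, a i)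
        Filter.atTop Filter.atTop := by
      rw [← not_summable_iff_tendsto_nat_atTop_of_nonneg (fun i => (ha i).le)]
      exact hs
    exact h0.comp (Filter.tendsto_add_atTop_nat 1)
  refine ⟨fun n => (S n)⁻¹, ?_, fun n => inv_pos.2 (hSpos n), ?_, ?_⟩
  · intro m n h
    exact inv_anti₀ (hSpos m) (hSmono h)
  · exact Filter.Tendsto.inv_tendsto_atTop hStop
  · show ¬ Summable fun n => a n * (S n)⁻¹
    intro h
    have hC : CauchySeq (fun n => ∑ i ∈ Finset.range n, a i * (S i)⁻¹) :=
      h.hasSum.tendsto_sum_nat.cauchySeq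
    rw [Metric.cauchySeq_iff'] at hC
    obtain ⟨N, hN⟩ := hC (1/2) (by norm_num)
    set c : ℝ := ∑ i ∈ Finset.range N, a i with hc
    have hc0 : 0 ≤ c := Finset.sum_nonneg fun i _ => (ha i).le
    obtain ⟨n, hn2, hn1⟩ :=
      ((hStop.eventually_ge_atTop (2 * c)).and (Filter.eventually_ge_atTop N)).exists
    have hrange : c = ∑ i ∈ Finset.range N, a i := hc
    have hblock : (1:ℝ)/2 ≤ ∑ i ∈ Finset.Ico N (n+1), a i * (S i)⁻¹ := by
      have h1 : ∀ i ∈ Finset.Ico N (n+1), a i * (S n)⁻¹ ≤ a i * (S i)⁻¹ := by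
        intro i hi
        have hin : i ≤ n := by simp only [Finset.mem_Ico] at hi; omega
        exact mul_le_mul_of_nonneg_left (inv_anti₀ (hSpos i) (hSmono hin)) (ha i).le
      calc (1:ℝ)/2 ≤ (S n - c) * (S n)⁻¹ := by
            rw [← div_eq_mul_inv, le_div_iff₀ (hSpos n)]; linarith
        _ = ∑ i ∈ Finset.Ico N (n+1), a i * (S n)⁻¹ := by
            rw [← Finset.sum_mul]
            congr 1
            have := Finset.sum_Ico_eq_sub a (show N ≤ n + 1 by omega)
            rw [this, ← hrange]
        _ ≤ _ := Finset.sum_le_sum h1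
    have hsum : ∑ i ∈ Finset.Ico N (n+1), a i * (S i)⁻¹ =
        (∑ i ∈ Finset.range (n+1), a i * (S i)⁻¹) -
          ∑ i ∈ Finset.range N, a i * (S i)⁻¹ :=
      Finset.sum_Ico_eq_sub _ (by omega)
    have hd := hN (n+1) (by omega)
    rw [Real.dist_eq] at hd
    have := (abs_lt.1 hd).2
    rw [hsum] at hblock
    linarith
end
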